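/- There exist constants C > 0 and m₀ ≥ 1, depending only on μ, such that for all integers m, n with m₀ < m ≤ n and X_m ≤ X_n ≤ 2X_m, and every real number k with k > X_m^{1/3}, one has |∫_{X_m^{2/3}}^{X_m - X_m^{1/3}} ⟨x⟩^μ e^{ikx} h_m(x) h_n(x) dx| ≤ C · k · m^{-(1/12 - μ/4)} · n^{-(1/12 - μ/4)}. -/

import Mathlib

open Real MeasureTheory intervalIntegral

/-- Physicists' Hermite polynomials, as functions on `ℝ`. -/
noncomputable def physHermite : ℕ → ℝ → ℝ
  | 0, _ => 1
  | 1, x => 2 * x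
  | n + 2, x => 2 * x * physHermite (n + 1) x - 2 * ((n : ℝ) + 1) * physHermite n x

/-- The `j`-th Hermite function (for `j ≥ 1`), the `L²`-normalized eigenfunction of
`-d²/dx² + x²` with eigenvalue `2j - 1`. -/
noncomputable def hermiteFun (j : ℕ) (x : ℝ) : ℝ :=
  ((2 : ℝ) ^ (j - 1) * (Nat.factorial (j - 1) : ℝ) * Real.sqrt Real.pi) ^ (-(1 : ℝ) / 2) *
    Real.exp (-x ^ 2 / 2) * physHermite (j - 1) x

/-- The turning point `X_j = √(2j - 1)`. -/
noncomputable def Xpt (j : ℕ) : ℝ := Real.sqrt (2 * (j : ℝ) - 1)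

/-- The oscillatory integrand `⟨x⟩^μ e^{ikx} h_m(x) h_n(x)`. -/
noncomputable def osc (μ k : ℝ) (m n : ℕ) (x : ℝ) : ℂ :=
  (Real.sqrt (1 + x ^ 2) ^ μ : ℝ) * Complex.exp (Complex.I * k * x) *
    (hermiteFun m x : ℂ) * (hermiteFun n x : ℂ)

lemma physHermite_zero (x : ℝ) : physHermite 0 x = 1 := rfl
lemma physHermite_one (x : ℝ) : physHermite 1 x = 2 * x := rfl
lemma physHermite_add_two (n : ℕ) (x : ℝ) :
    physHermite (n + 2) x = 2 * x * physHermite (n + 1) x - 2 * ((n : ℝ) + 1) * physHermite n x :=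
  rfl

lemma physHermite_rec (n : ℕ) (x : ℝ) :
    physHermite (n + 1) x = 2 * x * physHermite n x - 2 * (n : ℝ) * physHermite (n - 1) x := by
  match n with
  | 0 => simp [physHermite_zero, physHermite_one]
  | Nat.succ j => rw [physHermite_add_two]; push_cast; simp

lemma hasDerivAt_physHermite : ∀ (n : ℕ) (x : ℝ),
    HasDerivAt (physHermite n) (2 * (n : ℝ) * physHermite (n - 1) x) x := by
  intro n
  induction n using Nat.strong_induction_on with
  | _ n ih =>
    match n with
    | 0 =>
      intro x
      simpa [show physHermite 0 = fun _ => (1:ℝ) from funext physHermite_zero] using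
        (hasDerivAt_const x (1 : ℝ))
    | 1 =>
      intro x
      have : HasDerivAt (fun y : ℝ => 2 * y) 2 x := by
        simpa using (hasDerivAt_id x).const_mul (2 : ℝ)
      simpa [show physHermite 1 = fun y => 2 * y from funext physHermite_one, physHermite_zero]
        using this
    | Nat.succ (Nat.succ k) =>
      intro x
      have h1 := ih (k + 1) (by omega)
      have h2 := ih k (by omega)
      have hx : HasDerivAt (fun y : ℝ => 2 * y * physHermite (k + 1) y -
          2 * ((k : ℝ) + 1) * physHermite k y)
          (2 * physHermite (k + 1) x + 2 * x * (2 * ((k : ℝ) + 1) * physHermite k x) -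
            2 * ((k : ℝ) + 1) * (2 * (k : ℝ) * physHermite (k - 1) x)) x := by
        have hA : HasDerivAt (fun y : ℝ => 2 * y * physHermite (k + 1) y)
            (2 * physHermite (k + 1) x + 2 * x * (2 * ((k : ℝ) + 1) * physHermite k x)) x := by
          have := ((hasDerivAt_id x).const_mul (2 : ℝ)).mul (by simpa using h1 x)
          exact this.congr_deriv (by simp only [id, mul_one])
        have hB : HasDerivAt (fun y : ℝ => 2 * ((k : ℝ) + 1) * physHermite k y)
            (2 * ((k : ℝ) + 1) * (2 * (k : ℝ) * physHermite (k - 1) x)) x :=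
          (h2 x).const_mul _
        exact hA.sub hB
      have hfun : (fun y : ℝ => 2 * y * physHermite (k + 1) y -
          2 * ((k : ℝ) + 1) * physHermite k y) = physHermite (k + 2) := by
        funext y; rw [physHermite_add_two]
      rw [hfun] at hx
      have key : 2 * physHermite (k + 1) x + 2 * x * (2 * ((k : ℝ) + 1) * physHermite k x) -
          2 * ((k : ℝ) + 1) * (2 * (k : ℝ) * physHermite (k - 1) x)
          = 2 * ((k : ℝ) + 2) * physHermite (k + 1) x := by
        have hr := physHermite_rec k x
        have hr2 : physHermite (k + 1) x = 2 * x * physHermite k x -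
            2 * (k : ℝ) * physHermite (k - 1) x := hr
        nlinarith [hr2]
      rw [key] at hx
      have : ((k + 1 + 1 : ℕ) : ℝ) = (k : ℝ) + 2 := by push_cast; ring
      simpa [this] using hx

lemma continuous_physHermite (n : ℕ) : Continuous (physHermite n) := by
  rw [continuous_iff_continuousAt]
  exact fun x => (hasDerivAt_physHermite n x).differentiableAt.continuousAt

lemma physHermite_bound (n : ℕ) : ∃ C : ℝ, 0 ≤ C ∧ ∀ x : ℝ,
    |physHermite n x| ≤ C * (1 + x ^ 2) ^ n := by
  induction n using Nat.strong_induction_on with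
  | _ n ih =>
    match n with
    | 0 => exact ⟨1, by norm_num, fun x => by simp [physHermite_zero]⟩
    | 1 =>
      refine ⟨2, by norm_num, fun x => ?_⟩
      rw [physHermite_one, abs_mul]
      have : |x| ≤ 1 + x ^ 2 := by nlinarith [abs_nonneg x, sq_abs x]
      calc |(2:ℝ)| * |x| = 2 * |x| := by norm_num
        _ ≤ 2 * (1 + x ^ 2) := by linarith
        _ = 2 * (1 + x ^ 2) ^ 1 := by ring
    | Nat.succ (Nat.succ k) =>
      obtain ⟨C1, hC1, hb1⟩ := ih (k + 1) (by omega)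
      obtain ⟨C2, hC2, hb2⟩ := ih k (by omega)
      refine ⟨2 * C1 + 2 * ((k : ℝ) + 1) * C2, by positivity, fun x => ?_⟩
      rw [physHermite_add_two]
      have h1 : (1:ℝ) ≤ 1 + x ^ 2 := by nlinarith
      have hp : (0:ℝ) < 1 + x ^ 2 := by nlinarith
      have hxb : |x| ≤ 1 + x ^ 2 := by nlinarith [abs_nonneg x, sq_abs x]
      have e1 : (1 + x ^ 2) ^ (k+1) ≤ (1 + x ^ 2) ^ (k+2) := pow_le_pow_right₀ h1 (by omega)
      have e2 : (1 + x ^ 2) ^ k ≤ (1 + x ^ 2) ^ (k+2) := pow_le_pow_right₀ h1 (by omega)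
      calc |2 * x * physHermite (k + 1) x - 2 * ((k : ℝ) + 1) * physHermite k x|
          ≤ |2 * x * physHermite (k + 1) x| + |2 * ((k : ℝ) + 1) * physHermite k x| :=
            abs_sub _ _
        _ = 2 * |x| * |physHermite (k + 1) x| + 2 * ((k : ℝ) + 1) * |physHermite k x| := by
            rw [abs_mul, abs_mul, abs_mul, abs_mul,
              abs_of_nonneg (by positivity : (0:ℝ) ≤ (k:ℝ) + 1)]
            norm_num
        _ ≤ 2 * (1 + x ^ 2) * (C1 * (1 + x ^ 2) ^ (k+1)) +
              2 * ((k : ℝ) + 1) * (C2 * (1 + x ^ 2) ^ k) := by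
            have g1 := mul_le_mul hxb (hb1 x) (abs_nonneg _) hp.le
            have g2 := mul_le_mul_of_nonneg_left (hb2 x)
              (by positivity : (0:ℝ) ≤ 2 * ((k:ℝ)+1))
            nlinarith [abs_nonneg (physHermite (k+1) x), abs_nonneg x]
        _ ≤ (2 * C1 + 2 * ((k : ℝ) + 1) * C2) * (1 + x ^ 2) ^ (k + 2) := by
            have : 2 * (1 + x ^ 2) * (C1 * (1 + x ^ 2) ^ (k+1)) = 2 * C1 * (1 + x^2)^(k+2) := by
              ring
            rw [this]
            have h2 : 2 * ((k : ℝ) + 1) * (C2 * (1 + x ^ 2) ^ k) ≤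
                2 * ((k : ℝ) + 1) * C2 * (1 + x ^ 2) ^ (k+2) := by
              have := mul_le_mul_of_nonneg_left e2 (by positivity : (0:ℝ) ≤ 2 * ((k:ℝ)+1) * C2)
              calc 2 * ((k : ℝ) + 1) * (C2 * (1 + x ^ 2) ^ k)
                  = 2 * ((k : ℝ) + 1) * C2 * (1 + x ^ 2) ^ k := by ring
                _ ≤ _ := this
            linarith

lemma gauss_poly_le (j : ℕ) (x : ℝ) : (1 + x ^ 2) ^ j * Real.exp (-x ^ 2) ≤
    (2 ^ j * (Nat.factorial j : ℝ) * Real.exp (1/2)) * Real.exp (-(1/2) * x ^ 2) := by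
  have ht : (0:ℝ) ≤ (1 + x ^ 2) / 2 := by positivity
  have h := Real.pow_div_factorial_le_exp (x := (1 + x ^ 2) / 2) ht j
  have hfac : (0:ℝ) < (Nat.factorial j : ℝ) := by positivity
  have h2 : (1 + x ^ 2) ^ j ≤ 2 ^ j * (Nat.factorial j : ℝ) * Real.exp ((1 + x ^ 2) / 2) := by
    rw [div_le_iff₀ hfac] at h
    have : ((1 + x ^ 2) / 2) ^ j = (1 + x ^ 2) ^ j / 2 ^ j := by
      rw [div_pow]
    rw [this] at h
    have h2j : (0:ℝ) < 2 ^ j := by positivity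
    calc (1 + x ^ 2) ^ j = 2 ^ j * ((1 + x ^ 2) ^ j / 2 ^ j) := by field_simp
      _ ≤ 2 ^ j * (Real.exp ((1 + x ^ 2) / 2) * (Nat.factorial j : ℝ)) := by
          gcongr
      _ = 2 ^ j * (Nat.factorial j : ℝ) * Real.exp ((1 + x ^ 2) / 2) := by ring
  have hkey : Real.exp ((1 + x ^ 2) / 2) * Real.exp (-x ^ 2) =
      Real.exp (1/2) * Real.exp (-(1/2) * x ^ 2) := by
    rw [← Real.exp_add, ← Real.exp_add]; ring_nf
  calc (1 + x ^ 2) ^ j * Real.exp (-x ^ 2)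
      ≤ (2 ^ j * (Nat.factorial j : ℝ) * Real.exp ((1 + x ^ 2) / 2)) * Real.exp (-x ^ 2) := by
        gcongr
    _ = (2 ^ j * (Nat.factorial j : ℝ)) * (Real.exp ((1 + x ^ 2) / 2) * Real.exp (-x ^ 2)) := by
        ring
    _ = (2 ^ j * (Nat.factorial j : ℝ) * Real.exp (1/2)) * Real.exp (-(1/2) * x ^ 2) := by
        rw [hkey]; ring

lemma integrable_gauss_poly (j : ℕ) :
    Integrable (fun x : ℝ => (1 + x ^ 2) ^ j * Real.exp (-x ^ 2)) := by
  have hg : Integrable (fun x : ℝ =>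
      (2 ^ j * (Nat.factorial j : ℝ) * Real.exp (1/2)) * Real.exp (-(1/2) * x ^ 2)) :=
    (integrable_exp_neg_mul_sq (by norm_num : (0:ℝ) < 1/2)).const_mul _
  refine hg.mono' ?_ ?_
  · exact (((continuous_const.add (continuous_pow 2)).pow j).mul
      ((continuous_pow 2).neg.rexp)).aestronglyMeasurable
  · filter_upwards with x
    rw [Real.norm_eq_abs, abs_of_nonneg (by positivity)]
    exact gauss_poly_le j x

lemma integrable_gauss_HH (a b : ℕ) :
    Integrable (fun x : ℝ => Real.exp (-x ^ 2) * physHermite a x * physHermite b x) := by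
  obtain ⟨C1, hC1, hb1⟩ := physHermite_bound a
  obtain ⟨C2, hC2, hb2⟩ := physHermite_bound b
  have hg : Integrable (fun x : ℝ => (C1 * C2) * ((1 + x ^ 2) ^ (a + b) * Real.exp (-x ^ 2))) :=
    (integrable_gauss_poly (a + b)).const_mul _
  refine hg.mono' ?_ ?_
  · exact (((continuous_pow 2).neg.rexp.mul (continuous_physHermite a)).mul
      (continuous_physHermite b)).aestronglyMeasurable
  · filter_upwards with x
    rw [Real.norm_eq_abs, abs_mul, abs_mul, abs_of_nonneg (Real.exp_pos _).le]
    have h1 := hb1 x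
    have h2 := hb2 x
    have hp : (0:ℝ) < 1 + x ^ 2 := by positivity
    have he : (0:ℝ) < Real.exp (-x ^ 2) := Real.exp_pos _
    calc Real.exp (-x ^ 2) * |physHermite a x| * |physHermite b x|
        ≤ Real.exp (-x ^ 2) * (C1 * (1 + x ^ 2) ^ a) * (C2 * (1 + x ^ 2) ^ b) := by
          gcongr
        _ = C1 * C2 * ((1 + x ^ 2) ^ (a + b) * Real.exp (-x ^ 2)) := by
          rw [pow_add]; ring

lemma tendsto_gauss_HH_atTop (a b : ℕ) :
    Filter.Tendsto (fun x : ℝ => Real.exp (-x ^ 2) * physHermite a x * physHermite b x)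
      Filter.atTop (nhds 0) ∧
    Filter.Tendsto (fun x : ℝ => Real.exp (-x ^ 2) * physHermite a x * physHermite b x)
      Filter.atBot (nhds 0) := by
  obtain ⟨C1, hC1, hb1⟩ := physHermite_bound a
  obtain ⟨C2, hC2, hb2⟩ := physHermite_bound b
  set D : ℝ := C1 * C2 * (2 ^ (a+b) * (Nat.factorial (a+b) : ℝ) * Real.exp (1/2)) with hD
  have hbound : ∀ x : ℝ, ‖Real.exp (-x ^ 2) * physHermite a x * physHermite b x‖ ≤
      D * Real.exp (-(1/2) * x ^ 2) := by
    intro x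
    rw [Real.norm_eq_abs, abs_mul, abs_mul, abs_of_nonneg (Real.exp_pos _).le]
    have hgp := gauss_poly_le (a+b) x
    have h1 := hb1 x
    have h2 := hb2 x
    have := mul_le_mul h1 h2 (abs_nonneg _) (by positivity : (0:ℝ) ≤ C1 * (1 + x ^ 2) ^ a)
    calc Real.exp (-x ^ 2) * |physHermite a x| * |physHermite b x|
        ≤ Real.exp (-x ^ 2) * (C1 * (1 + x ^ 2) ^ a * (C2 * (1 + x ^ 2) ^ b)) := by
          rw [mul_assoc]
          gcongr
      _ = C1 * C2 * ((1 + x ^ 2) ^ (a + b) * Real.exp (-x ^ 2)) := by rw [pow_add]; ring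
      _ ≤ D * Real.exp (-(1/2) * x ^ 2) := by
          have hh := mul_le_mul_of_nonneg_left hgp (mul_nonneg hC1 hC2)
          calc C1 * C2 * ((1 + x ^ 2) ^ (a + b) * Real.exp (-x ^ 2)) ≤
              C1 * C2 * ((2 ^ (a+b) * (Nat.factorial (a+b) : ℝ) * Real.exp (1/2)) *
                Real.exp (-(1/2) * x ^ 2)) := hh
            _ = D * Real.exp (-(1/2) * x ^ 2) := by rw [hD]; ring
  have hsq_top : Filter.Tendsto (fun x : ℝ => -(1/2) * x ^ 2) Filter.atTop Filter.atBot := by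
    apply Filter.Tendsto.const_mul_atTop_of_neg (by norm_num : (-(1/2) : ℝ) < 0)
    exact Filter.tendsto_pow_atTop (by norm_num)
  have hsq_bot : Filter.Tendsto (fun x : ℝ => -(1/2) * x ^ 2) Filter.atBot Filter.atBot := by
    apply Filter.Tendsto.const_mul_atTop_of_neg (by norm_num : (-(1/2) : ℝ) < 0)
    have habs : Filter.Tendsto (fun x : ℝ => |x|) Filter.atBot Filter.atTop :=
      Filter.tendsto_abs_atBot_atTop
    have : Filter.Tendsto (fun x : ℝ => |x| ^ 2) Filter.atBot Filter.atTop :=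
      (Filter.tendsto_pow_atTop (by norm_num)).comp habs
    simpa [sq_abs] using this
  have hexp_top : Filter.Tendsto (fun x : ℝ => D * Real.exp (-(1/2) * x ^ 2))
      Filter.atTop (nhds 0) := by
    have := Real.tendsto_exp_atBot.comp hsq_top
    simpa using (this.const_mul D)
  have hexp_bot : Filter.Tendsto (fun x : ℝ => D * Real.exp (-(1/2) * x ^ 2))
      Filter.atBot (nhds 0) := by
    have := Real.tendsto_exp_atBot.comp hsq_bot
    simpa using (this.const_mul D)
  constructor
  · exact squeeze_zero_norm hbound hexp_top
  · exact squeeze_zero_norm hbound hexp_bot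

lemma gauss_HH_succ (k : ℕ) :
    (∫ x : ℝ, Real.exp (-x ^ 2) * physHermite (k+1) x * physHermite (k+1) x) =
      2 * ((k : ℝ) + 1) * ∫ x : ℝ, Real.exp (-x ^ 2) * physHermite k x * physHermite k x := by
  set f : ℝ → ℝ := fun x => Real.exp (-x ^ 2) * physHermite k x * physHermite (k+1) x with hf
  set f' : ℝ → ℝ := fun x =>
    2 * ((k : ℝ) + 1) * (Real.exp (-x ^ 2) * physHermite k x * physHermite k x) -
      Real.exp (-x ^ 2) * physHermite (k+1) x * physHermite (k+1) x with hf'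
  have hderiv : ∀ x : ℝ, HasDerivAt f (f' x) x := by
    intro x
    have hE : HasDerivAt (fun y : ℝ => Real.exp (-y ^ 2)) (-2 * x * Real.exp (-x ^ 2)) x := by
      have h1 : HasDerivAt (fun y : ℝ => -y ^ 2) (-(2 * x)) x := by
        exact ((hasDerivAt_pow 2 x).neg).congr_deriv (by norm_num)
      simpa [mul_comm, mul_assoc] using h1.exp
    have hk := hasDerivAt_physHermite k x
    have hk1 := hasDerivAt_physHermite (k+1) x
    have hmul := (hE.mul hk).mul hk1
    have harg : (fun y => Real.exp (-y ^ 2) * physHermite k y * physHermite (k+1) y) = f := rfl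
    change HasDerivAt f _ x at hmul
    simp only [Pi.mul_apply] at hmul
    convert hmul using 1
    have hsimp : ((k + 1 : ℕ) : ℝ) = (k : ℝ) + 1 := by push_cast; ring
    have hk1sub : (k + 1 : ℕ) - 1 = k := by omega
    rw [hf']
    rw [hk1sub, hsimp]
    -- goal: algebraic identity
    have hrec : physHermite (k+1) x = 2 * x * physHermite k x -
        2 * (k : ℝ) * physHermite (k - 1) x := physHermite_rec k x
    linear_combination (-(Real.exp (-x ^ 2) * physHermite (k+1) x)) * hrec
  have hint : Integrable f' := by
    exact ((integrable_gauss_HH k k).const_mul _).sub (integrable_gauss_HH (k+1) (k+1))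
  have htop := (tendsto_gauss_HH_atTop k (k+1)).1
  have hbot := (tendsto_gauss_HH_atTop k (k+1)).2
  have h0 : (∫ x : ℝ, f' x) = 0 - 0 :=
    MeasureTheory.integral_of_hasDerivAt_of_tendsto hderiv hint hbot htop
  rw [hf'] at h0
  rw [MeasureTheory.integral_sub ((integrable_gauss_HH k k).const_mul _)
    (integrable_gauss_HH (k+1) (k+1)), MeasureTheory.integral_const_mul] at h0
  linarith [h0]

lemma gauss_HH_eq (k : ℕ) :
    (∫ x : ℝ, Real.exp (-x ^ 2) * physHermite k x * physHermite k x) =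
      2 ^ k * (Nat.factorial k : ℝ) * Real.sqrt Real.pi := by
  induction k with
  | zero =>
    simp only [physHermite_zero, mul_one, pow_zero, Nat.factorial_zero, Nat.cast_one, one_mul]
    have := integral_gaussian 1
    simpa using this
  | succ n ih =>
    rw [gauss_HH_succ n, ih]
    rw [Nat.factorial_succ]
    push_cast
    ring

lemma hermiteFun_sq_integral (j : ℕ) :
    (∫ x : ℝ, (hermiteFun j x) ^ 2) = 1 := by
  set A : ℝ := (2 : ℝ) ^ (j - 1) * (Nat.factorial (j - 1) : ℝ) * Real.sqrt Real.pi with hA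
  have hApos : 0 < A := by
    rw [hA]
    have := Real.sqrt_pos.mpr Real.pi_pos
    positivity
  have hsq : ∀ x : ℝ, (hermiteFun j x) ^ 2 =
      A⁻¹ * (Real.exp (-x ^ 2) * physHermite (j-1) x * physHermite (j-1) x) := by
    intro x
    rw [hermiteFun]
    have hc : ((A : ℝ) ^ (-(1:ℝ) / 2)) ^ 2 = A⁻¹ := by
      rw [← Real.rpow_natCast (A ^ (-(1:ℝ)/2)) 2, ← Real.rpow_mul hApos.le]
      norm_num
      exact Real.rpow_neg_one A
    have he : Real.exp (-x ^ 2 / 2) ^ 2 = Real.exp (-x ^ 2) := by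
      rw [← Real.exp_nat_mul]
      norm_num
      ring_nf
    rw [← hA, mul_pow, mul_pow, hc, he]
    ring
  simp_rw [hsq]
  rw [MeasureTheory.integral_const_mul, gauss_HH_eq, ← hA]
  field_simp

lemma integrable_hermiteFun_sq (j : ℕ) : Integrable (fun x : ℝ => (hermiteFun j x) ^ 2) := by
  have : (fun x : ℝ => (hermiteFun j x) ^ 2) = fun x =>
      (((2 : ℝ) ^ (j - 1) * (Nat.factorial (j - 1) : ℝ) * Real.sqrt Real.pi) ^ (-(1:ℝ)/2)) ^ 2 *
        (Real.exp (-x ^ 2) * physHermite (j-1) x * physHermite (j-1) x) := by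
    funext x
    rw [hermiteFun]
    have he : Real.exp (-x ^ 2 / 2) ^ 2 = Real.exp (-x ^ 2) := by
      rw [← Real.exp_nat_mul]
      norm_num
      ring_nf
    rw [mul_pow, mul_pow, he]
    ring
  rw [this]
  exact (integrable_gauss_HH (j-1) (j-1)).const_mul _

lemma continuous_hermiteFun (j : ℕ) : Continuous (hermiteFun j) := by
  unfold hermiteFun
  exact (continuous_const.mul (((continuous_pow 2).neg.div_const 2).rexp)).mul
    (continuous_physHermite (j-1))

lemma abs_mul_le_half_sq (u v : ℝ) : |u| * |v| ≤ (u ^ 2 + v ^ 2) / 2 := by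
  nlinarith [sq_nonneg (|u| - |v|), sq_abs u, sq_abs v, abs_nonneg u, abs_nonneg v]


set_option maxHeartbeats 1600000 in
/-- estimate on `[X_m^{2/3}, X_m - X_m^{1/3}]` for large `k`. -/
theorem hermite_oscillatory_large_k (μ : ℝ) (hμ0 : 0 ≤ μ) (hμ1 : μ < 1 / 3) :
    ∃ C : ℝ, 0 < C ∧ ∃ m₀ : ℕ, 1 ≤ m₀ ∧ ∀ m n : ℕ, m₀ < m → m ≤ n →
      Xpt m ≤ Xpt n → Xpt n ≤ 2 * Xpt m → ∀ k : ℝ, (Xpt m) ^ ((1 : ℝ) / 3) < k →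
      ‖∫ x in ((Xpt m) ^ ((2 : ℝ) / 3))..(Xpt m - (Xpt m) ^ ((1 : ℝ) / 3)), osc μ k m n x‖ ≤
        C * k * (m : ℝ) ^ (-(1 / 12 - μ / 4)) * (n : ℝ) ^ (-(1 / 12 - μ / 4)) := by
  refine ⟨4, by norm_num, 50, by norm_num, ?_⟩
  intro m n hm hmn _ hXn2 k hk
  have hm51 : (51 : ℕ) ≤ m := hm
  have hmR : (51 : ℝ) ≤ (m : ℝ) := by exact_mod_cast hm51
  have hmpos : (0 : ℝ) < (m : ℝ) := by linarith
  have hnR : (m : ℝ) ≤ (n : ℝ) := by exact_mod_cast hmn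
  have hnpos : (0 : ℝ) < (n : ℝ) := by linarith
  have h2m1 : (64 : ℝ) ≤ 2 * (m : ℝ) - 1 := by linarith
  have h2m1pos : (0 : ℝ) < 2 * (m : ℝ) - 1 := by linarith
  have hX0 : 0 ≤ Xpt m := Real.sqrt_nonneg _
  have hX8 : (8 : ℝ) ≤ Xpt m := by
    rw [Xpt, show (8:ℝ) = Real.sqrt 64 by
      rw [show (64:ℝ) = 8 ^ 2 by norm_num, Real.sqrt_sq (by norm_num : (0:ℝ) ≤ 8)]]
    exact Real.sqrt_le_sqrt h2m1
  have ht0 : 0 ≤ Xpt m ^ ((1:ℝ)/3) := Real.rpow_nonneg hX0 _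
  have ht2 : (2 : ℝ) ≤ Xpt m ^ ((1:ℝ)/3) := by
    rw [show (2:ℝ) = (8:ℝ) ^ ((1:ℝ)/3) by
      rw [show (8:ℝ) = (2:ℝ) ^ (3:ℕ) by norm_num, ← Real.rpow_natCast 2 3,
        ← Real.rpow_mul (by norm_num : (0:ℝ) ≤ 2)]
      norm_num]
    exact Real.rpow_le_rpow (by norm_num) hX8 (by norm_num)
  have hXt3 : Xpt m = (Xpt m ^ ((1:ℝ)/3)) ^ 3 := by
    rw [← Real.rpow_natCast (Xpt m ^ ((1:ℝ)/3)) 3, ← Real.rpow_mul hX0]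
    norm_num
  have ha2 : Xpt m ^ ((2 : ℝ) / 3) = (Xpt m ^ ((1:ℝ)/3)) ^ 2 := by
    rw [← Real.rpow_natCast (Xpt m ^ ((1:ℝ)/3)) 2, ← Real.rpow_mul hX0]
    norm_num
  have hab : Xpt m ^ ((2 : ℝ) / 3) ≤ Xpt m - Xpt m ^ ((1:ℝ)/3) := by
    rw [ha2]
    nlinarith [hXt3, ht2]
  have ha0 : 0 ≤ Xpt m ^ ((2 : ℝ) / 3) := Real.rpow_nonneg hX0 _
  have hbX : Xpt m - Xpt m ^ ((1:ℝ)/3) ≤ Xpt m := by linarith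
  have hMpos : 0 < (2 * (m : ℝ)) ^ (μ / 2) := Real.rpow_pos_of_pos (by linarith) _
  have hosc_cont : Continuous (osc μ k m n) := by
    unfold osc
    apply Continuous.mul
    apply Continuous.mul
    apply Continuous.mul
    · exact Complex.continuous_ofReal.comp
        (((continuous_const.add (continuous_pow 2)).sqrt).rpow_const (fun x => Or.inr hμ0))
    · exact Complex.continuous_exp.comp (continuous_const.mul Complex.continuous_ofReal)
    · exact Complex.continuous_ofReal.comp (continuous_hermiteFun m)
    · exact Complex.continuous_ofReal.comp (continuous_hermiteFun n)
  have hnorm : ∀ x ∈ Set.Icc (Xpt m ^ ((2 : ℝ) / 3)) (Xpt m - Xpt m ^ ((1:ℝ)/3)),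
      ‖osc μ k m n x‖ ≤
        (2 * (m : ℝ)) ^ (μ / 2) * ((hermiteFun m x ^ 2 + hermiteFun n x ^ 2) / 2) := by
    intro x hx
    obtain ⟨hxa, hxb⟩ := hx
    have hx0 : 0 ≤ x := le_trans ha0 hxa
    have hxX : x ≤ Xpt m := le_trans hxb hbX
    have hr0 : (0:ℝ) ≤ Real.sqrt (1 + x ^ 2) ^ μ :=
      Real.rpow_nonneg (Real.sqrt_nonneg _) _
    have hexp1 : ‖Complex.exp (Complex.I * k * x)‖ = 1 := by
      rw [show Complex.I * (k : ℂ) * (x : ℂ) = ((k * x : ℝ) : ℂ) * Complex.I by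
        push_cast; ring]
      exact Complex.norm_exp_ofReal_mul_I _
    have hnormeq : ‖osc μ k m n x‖ =
        Real.sqrt (1 + x ^ 2) ^ μ * (|hermiteFun m x| * |hermiteFun n x|) := by
      unfold osc
      rw [norm_mul, norm_mul, norm_mul, hexp1, Complex.norm_real, Complex.norm_real,
        Complex.norm_real, Real.norm_eq_abs, Real.norm_eq_abs, Real.norm_eq_abs,
        abs_of_nonneg hr0]
      ring
    rw [hnormeq]
    have hXsq : Xpt m ^ 2 = 2 * (m : ℝ) - 1 := Real.sq_sqrt h2m1pos.le
    have hsqrt_le : Real.sqrt (1 + x ^ 2) ^ μ ≤ (2 * (m : ℝ)) ^ (μ / 2) := by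
      have h1 : Real.sqrt (1 + x ^ 2) ≤ Real.sqrt (2 * (m : ℝ)) := by
        apply Real.sqrt_le_sqrt
        nlinarith
      have h2 : Real.sqrt (1 + x ^ 2) ^ μ ≤ Real.sqrt (2 * (m : ℝ)) ^ μ :=
        Real.rpow_le_rpow (Real.sqrt_nonneg _) h1 hμ0
      have h3 : Real.sqrt (2 * (m : ℝ)) ^ μ = (2 * (m : ℝ)) ^ (μ / 2) := by
        rw [Real.sqrt_eq_rpow, ← Real.rpow_mul (by linarith : (0:ℝ) ≤ 2 * (m:ℝ)),
          show (1/2) * μ = μ / 2 by ring]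
      linarith
    have hprod := abs_mul_le_half_sq (hermiteFun m x) (hermiteFun n x)
    exact mul_le_mul hsqrt_le hprod (by positivity) hMpos.le
  have hGint : Integrable (fun x : ℝ =>
      (2 * (m : ℝ)) ^ (μ / 2) * ((hermiteFun m x ^ 2 + hermiteFun n x ^ 2) / 2)) :=
    (((integrable_hermiteFun_sq m).add (integrable_hermiteFun_sq n)).div_const 2).const_mul _
  have hGval : (∫ x : ℝ, (2 * (m : ℝ)) ^ (μ / 2) *
      ((hermiteFun m x ^ 2 + hermiteFun n x ^ 2) / 2)) = (2 * (m : ℝ)) ^ (μ / 2) := by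
    rw [MeasureTheory.integral_const_mul]
    have : (∫ x : ℝ, (hermiteFun m x ^ 2 + hermiteFun n x ^ 2) / 2) = 1 := by
      rw [MeasureTheory.integral_div, MeasureTheory.integral_add (integrable_hermiteFun_sq m)
        (integrable_hermiteFun_sq n), hermiteFun_sq_integral, hermiteFun_sq_integral]
      norm_num
    rw [this, mul_one]
  have step1 : ‖∫ x in (Xpt m ^ ((2 : ℝ) / 3))..(Xpt m - Xpt m ^ ((1:ℝ)/3)), osc μ k m n x‖ ≤
      ∫ x in (Xpt m ^ ((2 : ℝ) / 3))..(Xpt m - Xpt m ^ ((1:ℝ)/3)), ‖osc μ k m n x‖ :=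
    intervalIntegral.norm_integral_le_integral_norm hab
  have step2 : (∫ x in (Xpt m ^ ((2 : ℝ) / 3))..(Xpt m - Xpt m ^ ((1:ℝ)/3)), ‖osc μ k m n x‖) ≤
      ∫ x in (Xpt m ^ ((2 : ℝ) / 3))..(Xpt m - Xpt m ^ ((1:ℝ)/3)),
        (2 * (m : ℝ)) ^ (μ / 2) * ((hermiteFun m x ^ 2 + hermiteFun n x ^ 2) / 2) := by
    apply intervalIntegral.integral_mono_on hab
    · exact hosc_cont.norm.intervalIntegrable _ _
    · exact hGint.intervalIntegrable
    · exact hnorm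
  have step3 : (∫ x in (Xpt m ^ ((2 : ℝ) / 3))..(Xpt m - Xpt m ^ ((1:ℝ)/3)),
      (2 * (m : ℝ)) ^ (μ / 2) * ((hermiteFun m x ^ 2 + hermiteFun n x ^ 2) / 2)) ≤
      (2 * (m : ℝ)) ^ (μ / 2) := by
    rw [intervalIntegral.integral_of_le hab]
    calc (∫ x in Set.Ioc (Xpt m ^ ((2 : ℝ) / 3)) (Xpt m - Xpt m ^ ((1:ℝ)/3)),
          (2 * (m : ℝ)) ^ (μ / 2) * ((hermiteFun m x ^ 2 + hermiteFun n x ^ 2) / 2))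
        ≤ ∫ x : ℝ, (2 * (m : ℝ)) ^ (μ / 2) *
            ((hermiteFun m x ^ 2 + hermiteFun n x ^ 2) / 2) := by
          apply MeasureTheory.setIntegral_le_integral hGint
          filter_upwards with x
          exact mul_nonneg hMpos.le (by positivity)
      _ = (2 * (m : ℝ)) ^ (μ / 2) := hGval
  have hn4m : (n : ℝ) ≤ 4 * (m : ℝ) := by
    have h1 : Real.sqrt (2 * (n:ℝ) - 1) ≤ 2 * Real.sqrt (2 * (m:ℝ) - 1) := hXn2
    have h2n1 : (0:ℝ) ≤ 2 * (n:ℝ) - 1 := by linarith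
    have hs1 := Real.sq_sqrt h2n1
    have hs2 := Real.sq_sqrt h2m1pos.le
    have hnn := Real.sqrt_nonneg (2 * (n:ℝ) - 1)
    have hmm := Real.sqrt_nonneg (2 * (m:ℝ) - 1)
    nlinarith
  have hk16 : (m : ℝ) ^ ((1:ℝ)/6) ≤ k := by
    have hXk : Xpt m ^ ((1:ℝ)/3) = (2 * (m:ℝ) - 1) ^ ((1:ℝ)/6) := by
      rw [Xpt, Real.sqrt_eq_rpow, ← Real.rpow_mul h2m1pos.le]
      norm_num
    have h1 : (m : ℝ) ^ ((1:ℝ)/6) ≤ (2 * (m:ℝ) - 1) ^ ((1:ℝ)/6) :=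
      Real.rpow_le_rpow hmpos.le (by linarith) (by norm_num)
    rw [← hXk] at h1
    linarith [hk]
  have hkpos : 0 < k := lt_of_le_of_lt (Real.rpow_nonneg hX0 _) hk
  have hα0 : 0 < 1 / 12 - μ / 4 := by linarith
  have hα12 : 1 / 12 - μ / 4 ≤ (1:ℝ) / 12 := by linarith
  have hfinal : (2 * (m : ℝ)) ^ (μ / 2) ≤
      4 * k * (m : ℝ) ^ (-(1 / 12 - μ / 4)) * (n : ℝ) ^ (-(1 / 12 - μ / 4)) := by
    set α : ℝ := 1 / 12 - μ / 4 with hα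
    have hn_rpow : (4 * (m:ℝ)) ^ (-α) ≤ (n : ℝ) ^ (-α) :=
      Real.rpow_le_rpow_of_nonpos hnpos hn4m (by linarith)
    have h4m : (4 * (m:ℝ)) ^ (-α) = 4 ^ (-α) * (m:ℝ) ^ (-α) :=
      Real.mul_rpow (by norm_num) hmpos.le
    have hmra : (0:ℝ) < (m:ℝ) ^ (-α) := Real.rpow_pos_of_pos hmpos _
    have hmr6 : (0:ℝ) < (m:ℝ) ^ ((1:ℝ)/6) := Real.rpow_pos_of_pos hmpos _
    have h4ma : (0:ℝ) < (4 * (m:ℝ)) ^ (-α) := Real.rpow_pos_of_pos (by linarith) _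
    have e1 : 4 * ((m:ℝ) ^ ((1:ℝ)/6)) * (m : ℝ) ^ (-α) * ((4 * (m:ℝ)) ^ (-α)) ≤
        4 * k * (m : ℝ) ^ (-α) * (n : ℝ) ^ (-α) := by
      apply mul_le_mul _ hn_rpow h4ma.le (by positivity)
      apply mul_le_mul_of_nonneg_right _ hmra.le
      apply mul_le_mul_of_nonneg_left hk16 (by norm_num)
    have e2 : 4 * ((m:ℝ) ^ ((1:ℝ)/6)) * (m : ℝ) ^ (-α) * ((4 * (m:ℝ)) ^ (-α)) =
        4 ^ (1 - α) * (m:ℝ) ^ ((1:ℝ)/6 - 2*α) := by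
      rw [h4m]
      rw [show (4:ℝ) ^ (1 - α) = 4 * 4 ^ (-α) by
        rw [show (1 - α) = 1 + (-α) by ring, Real.rpow_add (by norm_num : (0:ℝ) < 4),
          Real.rpow_one]]
      rw [show (m:ℝ) ^ ((1:ℝ)/6 - 2*α) = (m:ℝ) ^ ((1:ℝ)/6) * (m:ℝ) ^ (-α) * (m:ℝ) ^ (-α) by
        rw [show (1:ℝ)/6 - 2*α = (1:ℝ)/6 + (-α) + (-α) by ring, Real.rpow_add hmpos,
          Real.rpow_add hmpos]]
      ring
    have hexp_eq : (1:ℝ)/6 - 2*α = μ/2 := by rw [hα]; ring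
    have hM_eq : (2 * (m : ℝ)) ^ (μ / 2) = 2 ^ (μ/2) * (m:ℝ) ^ (μ/2) :=
      Real.mul_rpow (by norm_num) hmpos.le
    have h2le : (2:ℝ) ^ (μ/2) ≤ 4 ^ (1-α) := by
      have ha' : (2:ℝ) ^ (μ/2) ≤ 2 ^ (1:ℝ) :=
        Real.rpow_le_rpow_of_exponent_le one_le_two (by linarith)
      have hb' : (4:ℝ) ^ ((1:ℝ)/2) ≤ 4 ^ (1-α) :=
        Real.rpow_le_rpow_of_exponent_le (by norm_num) (by rw [hα]; linarith)
      have hc' : (4:ℝ) ^ ((1:ℝ)/2) = 2 := by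
        rw [show (4:ℝ) = (2:ℝ) ^ (2:ℕ) by norm_num, ← Real.rpow_natCast 2 2,
          ← Real.rpow_mul (by norm_num : (0:ℝ) ≤ 2)]
        norm_num
      rw [Real.rpow_one] at ha'
      linarith
    have hmmu : (0:ℝ) ≤ (m:ℝ) ^ (μ/2) := (Real.rpow_pos_of_pos hmpos _).le
    calc (2 * (m : ℝ)) ^ (μ / 2) = 2 ^ (μ/2) * (m:ℝ) ^ (μ/2) := hM_eq
      _ ≤ 4 ^ (1-α) * (m:ℝ) ^ (μ/2) := mul_le_mul_of_nonneg_right h2le hmmu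
      _ = 4 ^ (1-α) * (m:ℝ) ^ ((1:ℝ)/6 - 2*α) := by rw [hexp_eq]
      _ = 4 * ((m:ℝ) ^ ((1:ℝ)/6)) * (m : ℝ) ^ (-α) * ((4 * (m:ℝ)) ^ (-α)) := e2.symm
      _ ≤ 4 * k * (m : ℝ) ^ (-α) * (n : ℝ) ^ (-α) := e1
  exact le_trans (le_trans step1 (le_trans step2 step3)) hfinal
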